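/- arXiv:2004.09899 — 4 statements merged into one kernel-verified Lean document; each statement's English description precedes it below -/
import Mathlib

section
/- Let B denote the Bayes factor of the constrained hypothesis H_c : θ_e = r_e, θ_o ∈ O against the unconstrained hypothesis H_u, i.e. B = Z_c / Z_u where Z_c = ∫∫ f(r_e, θ_o, φ) π_c(θ_o, φ) d(μ_o ⊗ μ_φ). Then B = (m1 / (m0 · P*)) · ∫∫ 1_O(θ_o) · (π*(θ_o, φ) / q(θ_o, φ)) · w(θ_o, φ) d(μ_o ⊗ μ_φ); that is, the Bayes factor equals the Savage–Dickey density ratio m1/m0, divided by the completed-prior probability P* of the order constraints, times the expectation under the conditional posterior w of the ratio of the completed constrained prior π* to the conditional unconstrained prior q, restricted to the order-constrained region O. -/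
open MeasureTheory

/-- Generalized Savage–Dickey density ratio for a hypothesis with equality and
order constraints: the Bayes factor of `H_c : θ_e = r_e, θ_o ∈ O` against the
unconstrained `H_u` equals the Savage–Dickey ratio `m1 / m0`, divided by the
completed-prior probability `Pstar` of the order constraints, times the
expectation under the conditional posterior `w` of the ratio of the completed
constrained prior `πstar` to the conditional unconstrained prior `q`,
restricted to the order-constrained region `O`. -/
theorem savage_dickey_equality_order_constraints
    {Θe Θo Φ : Type*} [MeasurableSpace Θe] [MeasurableSpace Θo] [MeasurableSpace Φ]
    (μe : Measure Θe) (μo : Measure Θo) (μφ : Measure Φ)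
    [SigmaFinite μe] [SigmaFinite μo] [SigmaFinite μφ]
    (f πu : Θe × Θo × Φ → ℝ)
    (hfm : Measurable f) (hπum : Measurable πu)
    (hf0 : ∀ x, 0 ≤ f x) (hπu0 : ∀ x, 0 ≤ πu x)
    (hπu1 : ∫ x, πu x ∂(μe.prod (μo.prod μφ)) = 1)
    (Zu : ℝ) (hZu : Zu = ∫ x, f x * πu x ∂(μe.prod (μo.prod μφ)))
    (hZuInt : Integrable (fun x => f x * πu x) (μe.prod (μo.prod μφ)))
    (hZupos : 0 < Zu)
    (re : Θe)
    (m0 : ℝ) (hm0 : m0 = ∫ p, πu (re, p) ∂(μo.prod μφ))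
    (hm0Int : Integrable (fun p => πu (re, p)) (μo.prod μφ)) (hm0pos : 0 < m0)
    (m1 : ℝ) (hm1 : m1 = Zu⁻¹ * ∫ p, f (re, p) * πu (re, p) ∂(μo.prod μφ))
    (hm1Int : Integrable (fun p => f (re, p) * πu (re, p)) (μo.prod μφ)) (hm1pos : 0 < m1)
    (q w : Θo × Φ → ℝ)
    (hq : ∀ p, q p = πu (re, p) / m0)
    (hw : ∀ p, w p = f (re, p) * πu (re, p) / (m1 * Zu))
    (O : Set Θo) (hO : MeasurableSet O)
    (πstar : Θo × Φ → ℝ) (hπstarm : Measurable πstar) (hπstar0 : ∀ p, 0 ≤ πstar p)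
    (hπstar1 : ∫ p, πstar p ∂(μo.prod μφ) = 1)
    (Pstar : ℝ)
    (hPstar : Pstar = ∫ p, O.indicator (fun _ => (1 : ℝ)) p.1 * πstar p ∂(μo.prod μφ))
    (hPstarpos : 0 < Pstar)
    (πc : Θo × Φ → ℝ)
    (hπc : ∀ p, πc p = Pstar⁻¹ * πstar p * O.indicator (fun _ => (1 : ℝ)) p.1)
    (hsupp : ∀ᵐ p ∂(μo.prod μφ),
      0 < O.indicator (fun _ => (1 : ℝ)) p.1 * πstar p * f (re, p) → 0 < πu (re, p))
    (Zc : ℝ) (hZc : Zc = ∫ p, f (re, p) * πc p ∂(μo.prod μφ))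
    (B : ℝ) (hB : B = Zc / Zu) :
    B = m1 / (m0 * Pstar) *
      ∫ p, O.indicator (fun _ => (1 : ℝ)) p.1 * (πstar p / q p) * w p ∂(μo.prod μφ) := by
  have hm0ne : m0 ≠ 0 := ne_of_gt hm0pos
  have hm1ne : m1 ≠ 0 := ne_of_gt hm1pos
  have hZune : Zu ≠ 0 := ne_of_gt hZupos
  have hPne : Pstar ≠ 0 := ne_of_gt hPstarpos
  have key : ∀ᵐ p ∂(μo.prod μφ),
      O.indicator (fun _ => (1 : ℝ)) p.1 * (πstar p / q p) * w p
        = (m0 / (m1 * Zu) * Pstar) * (f (re, p) * πc p) := by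
    filter_upwards [hsupp] with p hp
    rw [hq, hw, hπc]
    rcases (hπu0 (re, p)).eq_or_lt with h0 | hpos
    · have hz : O.indicator (fun _ => (1 : ℝ)) p.1 * πstar p * f (re, p) = 0 := by
        by_contra hne
        have hge : 0 ≤ O.indicator (fun _ => (1 : ℝ)) p.1 * πstar p * f (re, p) := by
          apply mul_nonneg (mul_nonneg _ (hπstar0 p)) (hf0 (re, p))
          exact Set.indicator_nonneg (fun _ _ => zero_le_one) _
        have := hp (lt_of_le_of_ne hge (Ne.symm hne))
        rw [← h0] at this; exact lt_irrefl 0 this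
      rw [← h0]
      simp only [zero_div, div_zero, mul_zero, zero_mul, zero_div]
      have : f (re, p) * (Pstar⁻¹ * πstar p * O.indicator (fun _ => (1 : ℝ)) p.1)
          = Pstar⁻¹ * (O.indicator (fun _ => (1 : ℝ)) p.1 * πstar p * f (re, p)) := by ring
      rw [this, hz]
      ring
    · have hne : πu (re, p) ≠ 0 := ne_of_gt hpos
      field_simp
  rw [hB, integral_congr_ae key, MeasureTheory.integral_const_mul, ← hZc]
  field_simp
end

section
/- Suppose the constrained prior is the truncation of the conditional unconstrained prior to the order-constrained region: π_c(θ_o, φ) = q(θ_o, φ) 1_O(θ_o) / Q0, where Q0 = ∫∫ 1_O(θ_o) q(θ_o, φ) d(μ_o ⊗ μ_φ) is assumed finite and strictly positive. Let Q1 = ∫∫ 1_O(θ_o) w(θ_o, φ) d(μ_o ⊗ μ_φ) be the conditional posterior probability of the order constraints. Then the Bayes factor B = Z_c / Z_u, with Z_c = ∫∫ f(r_e, θ_o, φ) π_c(θ_o, φ) d(μ_o ⊗ μ_φ), satisfies B = (m1/m0) · (Q1/Q0); that is, the Bayes factor equals the Savage–Dickey density ratio times the ratio of the conditional posterior and conditional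 prior probabilities of the order constraints. -/
open MeasureTheory

/-- Savage–Dickey density ratio for equality and order constraints when the
constrained prior is the truncation of the conditional unconstrained prior to
the order-constrained region: the Bayes factor equals the Savage–Dickey ratio
`m1 / m0` times the ratio `Q1 / Q0` of the conditional posterior and conditional
prior probabilities of the order constraints. -/
theorem savage_dickey_truncated_prior
    {Θe Θo Φ : Type*} [MeasurableSpace Θe] [MeasurableSpace Θo] [MeasurableSpace Φ]
    (μe : Measure Θe) (μo : Measure Θo) (μφ : Measure Φ)
    [SigmaFinite μe] [SigmaFinite μo] [SigmaFinite μφ]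
    (f πu : Θe × Θo × Φ → ℝ)
    (hfm : Measurable f) (hπum : Measurable πu)
    (hf0 : ∀ x, 0 ≤ f x) (hπu0 : ∀ x, 0 ≤ πu x)
    (hπu1 : ∫ x, πu x ∂(μe.prod (μo.prod μφ)) = 1)
    (Zu : ℝ) (hZu : Zu = ∫ x, f x * πu x ∂(μe.prod (μo.prod μφ)))
    (hZuInt : Integrable (fun x => f x * πu x) (μe.prod (μo.prod μφ)))
    (hZupos : 0 < Zu)
    (re : Θe)
    (m0 : ℝ) (hm0 : m0 = ∫ p, πu (re, p) ∂(μo.prod μφ))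
    (hm0Int : Integrable (fun p => πu (re, p)) (μo.prod μφ)) (hm0pos : 0 < m0)
    (m1 : ℝ) (hm1 : m1 = Zu⁻¹ * ∫ p, f (re, p) * πu (re, p) ∂(μo.prod μφ))
    (hm1Int : Integrable (fun p => f (re, p) * πu (re, p)) (μo.prod μφ)) (hm1pos : 0 < m1)
    (q w : Θo × Φ → ℝ)
    (hq : ∀ p, q p = πu (re, p) / m0)
    (hw : ∀ p, w p = f (re, p) * πu (re, p) / (m1 * Zu))
    (O : Set Θo) (hO : MeasurableSet O)
    (Q0 : ℝ) (hQ0 : Q0 = ∫ p, O.indicator (fun _ => (1 : ℝ)) p.1 * q p ∂(μo.prod μφ))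
    (hQ0Int : Integrable (fun p => O.indicator (fun _ => (1 : ℝ)) p.1 * q p) (μo.prod μφ))
    (hQ0pos : 0 < Q0)
    (Q1 : ℝ) (hQ1 : Q1 = ∫ p, O.indicator (fun _ => (1 : ℝ)) p.1 * w p ∂(μo.prod μφ))
    (πc : Θo × Φ → ℝ)
    (hπc : ∀ p, πc p = q p * O.indicator (fun _ => (1 : ℝ)) p.1 / Q0)
    (Zc : ℝ) (hZc : Zc = ∫ p, f (re, p) * πc p ∂(μo.prod μφ))
    (B : ℝ) (hB : B = Zc / Zu) :
    B = m1 / m0 * (Q1 / Q0) := by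
  set I := ∫ p, O.indicator (fun _ => (1 : ℝ)) p.1 * (f (re, p) * πu (re, p)) ∂(μo.prod μφ)
    with hI
  have hQ1' : Q1 = I / (m1 * Zu) := by
    rw [hQ1, ← integral_div]
    congr 1; ext p; rw [hw]; ring
  have hZc' : Zc = I / (m0 * Q0) := by
    rw [hZc, ← integral_div]
    congr 1; ext p; rw [hπc, hq]; ring
  rw [hB, hZc', hQ1']
  field_simp
end

section
/- (Verdinelli–Wasserman generalized Savage–Dickey density ratio.) Let π_c : Φ → [0,∞) be any measurable probability density with respect to μ_φ (the constrained prior for the nuisance parameters), and assume the support condition: π_u(r, φ) > 0 for μ_φ-almost every φ with π_c(φ) f(r, φ) > 0. Then the Bayes factor B = Z_c / Z_u, where Z_c = ∫ f(r, φ) π_c(φ) dμ_φ, satisfies B = (m1/m0) · ∫ (π_c(φ)/q(φ)) w(φ) dμ_φ; that is, the Bayes factor equals the Savage–Dickey density ratio m1/m0 times the expectation, under the conditional posterior w, of the ratio of the constrained prior π_c to the conditional unconstrained prior q. -/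
open MeasureTheory

/-- Verdinelli–Wasserman generalized Savage–Dickey density ratio: for an arbitrary
constrained prior `πc` for the nuisance parameters (satisfying a support condition),
the Bayes factor equals the Savage–Dickey density ratio `m1 / m0` times the
expectation, under the conditional posterior `w`, of the ratio `πc / q` of the
constrained prior to the conditional unconstrained prior. -/
theorem generalized_savage_dickey_density_ratio
    {Θ Φ : Type*} [MeasurableSpace Θ] [MeasurableSpace Φ]
    (μθ : Measure Θ) (μφ : Measure Φ) [SigmaFinite μθ] [SigmaFinite μφ]
    (f πu : Θ × Φ → ℝ)
    (hfm : Measurable f) (hπum : Measurable πu)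
    (hf0 : ∀ x, 0 ≤ f x) (hπu0 : ∀ x, 0 ≤ πu x)
    (hπu1 : ∫ x, πu x ∂(μθ.prod μφ) = 1)
    (Zu : ℝ) (hZu : Zu = ∫ x, f x * πu x ∂(μθ.prod μφ))
    (hZuInt : Integrable (fun x => f x * πu x) (μθ.prod μφ))
    (hZupos : 0 < Zu)
    (r : Θ)
    (m0 : ℝ) (hm0 : m0 = ∫ φ, πu (r, φ) ∂μφ)
    (hm0Int : Integrable (fun φ => πu (r, φ)) μφ) (hm0pos : 0 < m0)
    (m1 : ℝ) (hm1 : m1 = Zu⁻¹ * ∫ φ, f (r, φ) * πu (r, φ) ∂μφ)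
    (hm1Int : Integrable (fun φ => f (r, φ) * πu (r, φ)) μφ) (hm1pos : 0 < m1)
    (q w : Φ → ℝ)
    (hq : ∀ φ, q φ = πu (r, φ) / m0)
    (hw : ∀ φ, w φ = f (r, φ) * πu (r, φ) / (m1 * Zu))
    (πc : Φ → ℝ) (hπcm : Measurable πc) (hπc0 : ∀ φ, 0 ≤ πc φ)
    (hπc1 : ∫ φ, πc φ ∂μφ = 1)
    (hsupp : ∀ᵐ φ ∂μφ, 0 < πc φ * f (r, φ) → 0 < πu (r, φ))
    (Zc : ℝ) (hZc : Zc = ∫ φ, f (r, φ) * πc φ ∂μφ)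
    (B : ℝ) (hB : B = Zc / Zu) :
    B = m1 / m0 * ∫ φ, (πc φ / q φ) * w φ ∂μφ := by
  have hm0ne : m0 ≠ 0 := ne_of_gt hm0pos
  have hm1ne : m1 ≠ 0 := ne_of_gt hm1pos
  have hZune : Zu ≠ 0 := ne_of_gt hZupos
  have key : ∀ᵐ φ ∂μφ,
      (πc φ / q φ) * w φ = (f (r, φ) * πc φ) * (m0 / (m1 * Zu)) := by
    filter_upwards [hsupp] with φ hφ
    rw [hq, hw]
    rcases eq_or_lt_of_le (hπu0 (r, φ)) with h0 | hpos
    · have hπcf : πc φ * f (r, φ) = 0 := by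
        by_contra hne
        have : 0 < πc φ * f (r, φ) :=
          lt_of_le_of_ne (mul_nonneg (hπc0 φ) (hf0 (r, φ))) (Ne.symm hne)
        exact absurd (hφ this) (by rw [← h0]; exact lt_irrefl _)
      have : f (r, φ) * πc φ = 0 := by linarith [hπcf, mul_comm (πc φ) (f (r, φ))]
      rw [← h0, this]
      ring
    · have hπune : πu (r, φ) ≠ 0 := ne_of_gt hpos
      field_simp
  rw [integral_congr_ae key, integral_mul_const, hB, hZc]
  field_simp
end

section
/- Let α₁, α₂, α₃, α₄ > 0 with α₂ + α₃ > 1. Then the marginal probability density of θ_e = γ₂ − γ₃ at 0, when (γ₁, γ₂, γ₃, γ₄) follows the Dirichlet(α₁, α₂, α₃, α₄) distribution, equals Γ(α₂+α₃)(α₁+α₂+α₃+α₄−1) / (Γ(α₂)Γ(α₃)(α₂+α₃−1) 2^{α₂+α₃−1}). Concretely, as an integral identity: ∫∫_{x>0, t>0, x+2t<1} (1/B(α)) x^{α₁−1} t^{α₂+α₃−2} (1 − x − 2t)^{α₄−1} dt dx = Γ(α₂+α₃)(α₁+α₂+α₃+α₄−1) / (Γ(α₂)Γ(α₃)(α₂+α₃−1)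 2^{α₂+α₃−1}), where B(α) = Γ(α₁)Γ(α₂)Γ(α₃)Γ(α₄)/Γ(α₁+α₂+α₃+α₄). -/
open MeasureTheory Real Set

lemma rbeta_integrableOn {s t : ℝ} (hs : 0 < s) (ht : 0 < t) :
    IntegrableOn (fun x : ℝ => x ^ (s - 1) * (1 - x) ^ (t - 1)) (Ioo 0 1) := by
  have hc := (Complex.betaIntegral_convergent (u := s) (v := t) (by simpa) (by simpa)).norm
  rw [intervalIntegrable_iff_integrableOn_Ioc_of_le zero_le_one] at hc
  refine ((hc.mono_set Ioo_subset_Ioc_self).congr ?_)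
  filter_upwards [ae_restrict_mem measurableSet_Ioo] with x hx
  have hx1 : (0:ℝ) < x := hx.1
  have hx2 : (0:ℝ) < 1 - x := by linarith [hx.2]
  simp only [norm_mul]
  rw [show (1 - (x:ℂ)) = ((1 - x : ℝ) : ℂ) by push_cast; ring]
  rw [Complex.norm_cpow_eq_rpow_re_of_pos hx1, Complex.norm_cpow_eq_rpow_re_of_pos hx2]
  norm_num

lemma rbeta_eval {s t : ℝ} (hs : 0 < s) (ht : 0 < t) :
    ∫ x in (0:ℝ)..1, x ^ (s - 1) * (1 - x) ^ (t - 1)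
      = Real.Gamma s * Real.Gamma t / Real.Gamma (s + t) := by
  have key : ((∫ x in (0:ℝ)..1, x ^ (s - 1) * (1 - x) ^ (t - 1) : ℝ) : ℂ)
      = Complex.betaIntegral s t := by
    rw [← intervalIntegral.integral_ofReal]
    refine intervalIntegral.integral_congr fun x hx => ?_
    rw [Set.uIcc_of_le zero_le_one] at hx
    have h1 : (0:ℝ) ≤ x := hx.1
    have h2 : (0:ℝ) ≤ 1 - x := by linarith [hx.2]
    push_cast [Complex.ofReal_cpow h1, Complex.ofReal_cpow h2]
    ring
  have hg := Complex.Gamma_mul_Gamma_eq_betaIntegral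
    (s := (s:ℂ)) (t := (t:ℂ)) (by simpa) (by simpa)
  rw [← key] at hg
  rw [show ((s:ℂ) + t) = ((s + t : ℝ) : ℂ) by push_cast; ring] at hg
  rw [Complex.Gamma_ofReal, Complex.Gamma_ofReal, Complex.Gamma_ofReal] at hg
  have hg' : Real.Gamma s * Real.Gamma t
      = Real.Gamma (s + t) * ∫ x in (0:ℝ)..1, x ^ (s - 1) * (1 - x) ^ (t - 1) := by
    exact_mod_cast hg
  have hpos : (0:ℝ) < Real.Gamma (s + t) := Real.Gamma_pos_of_pos (by linarith)
  field_simp at hg' ⊢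
  linarith [hg']

lemma rbeta_pointwise {s t a : ℝ} (ha : 0 < a) {x : ℝ} (hx : x ∈ Icc (0:ℝ) a) :
    x ^ (s - 1) * (a - x) ^ (t - 1)
      = a ^ (s + t - 2) * ((x / a) ^ (s - 1) * (1 - x / a) ^ (t - 1)) := by
  have h1 : (1 : ℝ) - x / a = (a - x) / a := by field_simp
  rw [h1, Real.div_rpow hx.1 ha.le, Real.div_rpow (by linarith [hx.2]) ha.le]
  have h2 : a ^ (s + t - 2) = a ^ (s - 1) * a ^ (t - 1) := by
    rw [← Real.rpow_add ha]; ring_nf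
  rw [h2]
  have h3 : a ^ (s - 1) ≠ 0 := (Real.rpow_pos_of_pos ha _).ne'
  have h4 : a ^ (t - 1) ≠ 0 := (Real.rpow_pos_of_pos ha _).ne'
  field_simp

lemma rbeta_scaled_integrableOn {s t : ℝ} (hs : 0 < s) (ht : 0 < t) {a : ℝ} (ha : 0 < a) :
    IntegrableOn (fun x : ℝ => x ^ (s - 1) * (a - x) ^ (t - 1)) (Ioo 0 a) := by
  have h0 : IntervalIntegrable (fun x : ℝ => x ^ (s - 1) * (1 - x) ^ (t - 1)) volume 0 1 := by
    rw [intervalIntegrable_iff_integrableOn_Ioc_of_le zero_le_one,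
      integrableOn_Ioc_iff_integrableOn_Ioo]
    exact rbeta_integrableOn hs ht
  have h1 := (h0.comp_mul_left (c := a⁻¹)).const_mul (a ^ (s + t - 2))
  rw [show (0:ℝ) / a⁻¹ = 0 by simp, show (1:ℝ) / a⁻¹ = a by field_simp] at h1
  rw [intervalIntegrable_iff_integrableOn_Ioc_of_le ha.le,
    integrableOn_Ioc_iff_integrableOn_Ioo] at h1
  refine h1.congr ?_
  filter_upwards [ae_restrict_mem measurableSet_Ioo] with x hx
  rw [show a⁻¹ * x = x / a by ring]
  exact (rbeta_pointwise ha ⟨hx.1.le, hx.2.le⟩).symm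

lemma rbeta_scaled_eval {s t : ℝ} (hs : 0 < s) (ht : 0 < t) {a : ℝ} (ha : 0 < a) :
    ∫ x in Ioo (0:ℝ) a, x ^ (s - 1) * (a - x) ^ (t - 1)
      = a ^ (s + t - 1) * (Real.Gamma s * Real.Gamma t / Real.Gamma (s + t)) := by
  rw [← integral_Ioc_eq_integral_Ioo, ← intervalIntegral.integral_of_le ha.le]
  have step1 : ∫ x in (0:ℝ)..a, x ^ (s - 1) * (a - x) ^ (t - 1)
      = ∫ x in (0:ℝ)..a, a ^ (s + t - 2) * ((x / a) ^ (s - 1) * (1 - x / a) ^ (t - 1)) := by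
    refine intervalIntegral.integral_congr fun x hx => ?_
    rw [Set.uIcc_of_le ha.le] at hx
    exact rbeta_pointwise ha hx
  rw [step1, intervalIntegral.integral_const_mul,
    intervalIntegral.integral_comp_div (fun y => y ^ (s - 1) * (1 - y) ^ (t - 1)) ha.ne',
    show (0:ℝ)/a = 0 by simp, div_self ha.ne', smul_eq_mul, rbeta_eval hs ht]
  rw [show a ^ (s + t - 1) = a ^ (s + t - 2) * a by
    rw [show s + t - 1 = (s + t - 2) + 1 by ring, Real.rpow_add_one ha.ne']]
  ring

/-- The marginal probability density of `θ_e = γ₂ − γ₃` at `0`, when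
`(γ₁, γ₂, γ₃, γ₄)` follows the `Dirichlet(α₁, α₂, α₃, α₄)` distribution, equals
`Γ(α₂+α₃)(α₁+α₂+α₃+α₄−1) / (Γ(α₂)Γ(α₃)(α₂+α₃−1) 2^{α₂+α₃−1})`, stated as an
integral identity over the slice `{γ₂ = γ₃ = t}`. -/
theorem dirichlet_marginal_density_of_difference_at_zero
    (α₁ α₂ α₃ α₄ : ℝ) (h₁ : 0 < α₁) (h₂ : 0 < α₂) (h₃ : 0 < α₃) (h₄ : 0 < α₄)
    (h23 : 1 < α₂ + α₃) :
    ∫ p in {p : ℝ × ℝ | 0 < p.1 ∧ 0 < p.2 ∧ p.1 + 2 * p.2 < 1},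
        (1 / (Real.Gamma α₁ * Real.Gamma α₂ * Real.Gamma α₃ * Real.Gamma α₄ /
            Real.Gamma (α₁ + α₂ + α₃ + α₄))) *
          p.1 ^ (α₁ - 1) * p.2 ^ (α₂ + α₃ - 2) * (1 - p.1 - 2 * p.2) ^ (α₄ - 1) =
      Real.Gamma (α₂ + α₃) * (α₁ + α₂ + α₃ + α₄ - 1) /
        (Real.Gamma α₂ * Real.Gamma α₃ * (α₂ + α₃ - 1) * 2 ^ (α₂ + α₃ - 1)) := by
  have hβ : (0:ℝ) < α₂ + α₃ - 1 := by linarith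
  have hq : (0:ℝ) < α₂ + α₃ - 1 + α₄ := by linarith
  have hG1 := Real.Gamma_pos_of_pos h₁
  have hG2 := Real.Gamma_pos_of_pos h₂
  have hG3 := Real.Gamma_pos_of_pos h₃
  have hG4 := Real.Gamma_pos_of_pos h₄
  have hGb1 := Real.Gamma_pos_of_pos hβ
  have hGq := Real.Gamma_pos_of_pos hq
  have hGS1 := Real.Gamma_pos_of_pos (show (0:ℝ) < α₁ + (α₂ + α₃ - 1 + α₄) by linarith)
  have hGSum := Real.Gamma_pos_of_pos (show (0:ℝ) < α₁ + α₂ + α₃ + α₄ by linarith)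
  set C : ℝ := 1 / (Real.Gamma α₁ * Real.Gamma α₂ * Real.Gamma α₃ * Real.Gamma α₄ /
      Real.Gamma (α₁ + α₂ + α₃ + α₄)) with hCdef
  have hCpos : 0 < C := by
    rw [hCdef]; positivity
  set f : ℝ × ℝ → ℝ := fun p =>
    C * p.1 ^ (α₁ - 1) * p.2 ^ (α₂ + α₃ - 2) * (1 - p.1 - 2 * p.2) ^ (α₄ - 1) with hfdef
  set S : Set (ℝ × ℝ) := {p : ℝ × ℝ | 0 < p.1 ∧ 0 < p.2 ∧ p.1 + 2 * p.2 < 1} with hSdef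
  show ∫ p in S, f p = _
  have hSopen : IsOpen S := by
    have h1 : IsOpen {p : ℝ × ℝ | 0 < p.1} := isOpen_lt continuous_const continuous_fst
    have h2 : IsOpen {p : ℝ × ℝ | 0 < p.2} := isOpen_lt continuous_const continuous_snd
    have h3 : IsOpen {p : ℝ × ℝ | p.1 + 2 * p.2 < 1} :=
      isOpen_lt (by continuity) continuous_const
    have hS' : S = {p : ℝ × ℝ | 0 < p.1} ∩ ({p : ℝ × ℝ | 0 < p.2} ∩
        {p : ℝ × ℝ | p.1 + 2 * p.2 < 1}) := by
      ext p; simp [hSdef, Set.mem_setOf_eq, and_assoc]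
    rw [hS']; exact h1.inter (h2.inter h3)
  have hS : MeasurableSet S := hSopen.measurableSet
  have hmf : Measurable f := by
    rw [hfdef]; fun_prop
  -- Step 1: to lintegral
  have hnn : 0 ≤ᵐ[volume.restrict S] f := by
    filter_upwards [ae_restrict_mem hS] with p hp
    obtain ⟨hp1, hp2, hp3⟩ := hp
    have h13 : (0:ℝ) ≤ 1 - p.1 - 2 * p.2 := by linarith
    have : f p = C * p.1 ^ (α₁ - 1) * p.2 ^ (α₂ + α₃ - 2) * (1 - p.1 - 2 * p.2) ^ (α₄ - 1) := rfl
    rw [this]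
    have := hp1.le
    have := hp2.le
    positivity
  rw [MeasureTheory.integral_eq_lintegral_of_nonneg_ae hnn
    (hmf.aestronglyMeasurable.restrict)]
  -- Step 2: Tonelli
  have hF : Measurable fun p : ℝ × ℝ => ENNReal.ofReal (f p) := hmf.ennreal_ofReal
  have tonelli : ∫⁻ p in S, ENNReal.ofReal (f p)
      = ∫⁻ x in Ioo (0:ℝ) 1, ∫⁻ t in Ioo (0:ℝ) ((1 - x) / 2),
          ENNReal.ofReal (f (x, t)) := by
    rw [← lintegral_indicator hS, Measure.volume_eq_prod,
      lintegral_prod _ (hF.indicator hS).aemeasurable]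
    have hind : ∀ x t : ℝ, S.indicator (fun p => ENNReal.ofReal (f p)) (x, t)
        = (Ioo (0:ℝ) 1).indicator (fun x' => (Ioo (0:ℝ) ((1 - x') / 2)).indicator
            (fun t' => ENNReal.ofReal (f (x', t'))) t) x := by
      intro x t
      have hiff : ((x, t) ∈ S) ↔ (x ∈ Ioo (0:ℝ) 1 ∧ t ∈ Ioo (0:ℝ) ((1 - x) / 2)) := by
        constructor
        · rintro ⟨ha, hb, hc⟩
          exact ⟨⟨ha, by linarith⟩, ⟨hb, by linarith⟩⟩
        · rintro ⟨⟨ha, hb⟩, ⟨hc, hd⟩⟩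
          exact ⟨ha, hc, by linarith⟩
      by_cases h1 : x ∈ Ioo (0:ℝ) 1 <;> by_cases h2 : t ∈ Ioo (0:ℝ) ((1 - x) / 2) <;>
        simp only [Set.mem_Ioo] at h1 h2 <;>
        simp [Set.indicator_apply, hiff, Set.mem_Ioo, h1, h2]
    simp only [hind]
    have hpull : ∀ x : ℝ, (∫⁻ t, (Ioo (0:ℝ) 1).indicator
          (fun x' => (Ioo (0:ℝ) ((1 - x') / 2)).indicator
            (fun t' => ENNReal.ofReal (f (x', t'))) t) x)
        = (Ioo (0:ℝ) 1).indicator (fun x' => ∫⁻ t, (Ioo (0:ℝ) ((1 - x') / 2)).indicator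
            (fun t' => ENNReal.ofReal (f (x', t'))) t) x := by
      intro x
      by_cases h1 : x ∈ Ioo (0:ℝ) 1 <;> simp [Set.indicator_apply, h1]
    simp only [hpull]
    rw [lintegral_indicator measurableSet_Ioo]
    refine setLIntegral_congr_fun measurableSet_Ioo (fun x _ => ?_)
    rw [lintegral_indicator measurableSet_Ioo]
  rw [tonelli]
  -- Step 3: inner evaluation
  have inner_eval : ∀ x ∈ Ioo (0:ℝ) 1,
      ∫⁻ t in Ioo (0:ℝ) ((1 - x) / 2), ENNReal.ofReal (f (x, t))
        = ENNReal.ofReal ((C * 2 ^ (1 - (α₂ + α₃)) *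
            (Real.Gamma (α₂ + α₃ - 1) * Real.Gamma α₄ / Real.Gamma (α₂ + α₃ - 1 + α₄))) *
            (x ^ (α₁ - 1) * (1 - x) ^ (α₂ + α₃ - 1 + α₄ - 1))) := by
    intro x hx
    have hx1 : (0:ℝ) < x := hx.1
    have hx2 : x < 1 := hx.2
    have hc : (0:ℝ) < (1 - x) / 2 := by linarith
    have congr1 : ∀ t ∈ Ioo (0:ℝ) ((1 - x) / 2), ENNReal.ofReal (f (x, t))
        = ENNReal.ofReal ((C * x ^ (α₁ - 1) * 2 ^ (α₄ - 1)) *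
            (t ^ (α₂ + α₃ - 1 - 1) * ((1 - x) / 2 - t) ^ (α₄ - 1))) := by
      intro t ht
      congr 1
      have h2ct : 1 - x - 2 * t = 2 * ((1 - x) / 2 - t) := by ring
      have hfr : f (x, t) = C * x ^ (α₁ - 1) * t ^ (α₂ + α₃ - 2) *
          (1 - x - 2 * t) ^ (α₄ - 1) := rfl
      rw [hfr, h2ct, Real.mul_rpow (by norm_num) (by linarith [ht.2]),
        show α₂ + α₃ - 1 - 1 = α₂ + α₃ - 2 by ring]
      ring
    rw [setLIntegral_congr_fun measurableSet_Ioo congr1]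
    rw [← ofReal_integral_eq_lintegral_ofReal
      ((rbeta_scaled_integrableOn hβ h₄ hc).const_mul _)
      (by
        filter_upwards [ae_restrict_mem measurableSet_Ioo] with t ht
        have h0t : (0:ℝ) ≤ t := ht.1.le
        have hct : (0:ℝ) ≤ (1 - x) / 2 - t := by linarith [ht.2]
        have hx0 : (0:ℝ) ≤ x := hx1.le
        positivity)]
    rw [integral_const_mul, rbeta_scaled_eval hβ h₄ hc]
    congr 1
    have hE : ((1 - x) / 2) ^ (α₂ + α₃ - 1 + α₄ - 1)
        = (1 - x) ^ (α₂ + α₃ - 1 + α₄ - 1) / 2 ^ (α₂ + α₃ - 1 + α₄ - 1) :=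
      Real.div_rpow (by linarith) (by norm_num) _
    have h2ne : ((2:ℝ) ^ (α₂ + α₃ - 1 + α₄ - 1)) ≠ 0 := (Real.rpow_pos_of_pos two_pos _).ne'
    have h2id : (2:ℝ) ^ (α₄ - 1) = 2 ^ (1 - (α₂ + α₃)) * 2 ^ (α₂ + α₃ - 1 + α₄ - 1) := by
      rw [← Real.rpow_add two_pos]; congr 1; ring
    rw [hE, h2id]
    field_simp
  rw [setLIntegral_congr_fun measurableSet_Ioo inner_eval]
  -- Step 4: outer evaluation
  set D : ℝ := C * 2 ^ (1 - (α₂ + α₃)) *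
      (Real.Gamma (α₂ + α₃ - 1) * Real.Gamma α₄ / Real.Gamma (α₂ + α₃ - 1 + α₄)) with hDdef
  have hDpos : 0 < D := by
    rw [hDdef]; positivity
  rw [← ofReal_integral_eq_lintegral_ofReal
    ((rbeta_integrableOn h₁ hq).const_mul D)
    (by
      filter_upwards [ae_restrict_mem measurableSet_Ioo] with x hx
      have h0x : (0:ℝ) ≤ x := hx.1.le
      have h1x : (0:ℝ) ≤ 1 - x := by linarith [hx.2]
      positivity)]
  rw [integral_const_mul]
  have houter : ∫ x in Ioo (0:ℝ) 1, x ^ (α₁ - 1) * (1 - x) ^ (α₂ + α₃ - 1 + α₄ - 1)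
      = Real.Gamma α₁ * Real.Gamma (α₂ + α₃ - 1 + α₄)
        / Real.Gamma (α₁ + (α₂ + α₃ - 1 + α₄)) := by
    rw [← integral_Ioc_eq_integral_Ioo, ← intervalIntegral.integral_of_le zero_le_one]
    exact rbeta_eval h₁ hq
  rw [houter, ENNReal.toReal_ofReal (by positivity)]
  -- Step 5: final arithmetic
  rw [hDdef, hCdef]
  have hgb : Real.Gamma (α₂ + α₃) = (α₂ + α₃ - 1) * Real.Gamma (α₂ + α₃ - 1) := by
    have h := Real.Gamma_add_one hβ.ne'
    rw [show α₂ + α₃ - 1 + 1 = α₂ + α₃ by ring] at h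
    exact h
  have hgs : Real.Gamma (α₁ + α₂ + α₃ + α₄)
      = (α₁ + (α₂ + α₃ - 1 + α₄)) * Real.Gamma (α₁ + (α₂ + α₃ - 1 + α₄)) := by
    have h := Real.Gamma_add_one (by positivity : (0:ℝ) < α₁ + (α₂ + α₃ - 1 + α₄)).ne'
    rw [show α₁ + (α₂ + α₃ - 1 + α₄) + 1 = α₁ + α₂ + α₃ + α₄ by ring] at h
    exact h
  have h2inv : (2:ℝ) ^ (1 - (α₂ + α₃)) = ((2:ℝ) ^ (α₂ + α₃ - 1))⁻¹ := by
    rw [show 1 - (α₂ + α₃) = -(α₂ + α₃ - 1) by ring, Real.rpow_neg (by norm_num)]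
  have h2ne : ((2:ℝ) ^ (α₂ + α₃ - 1)) ≠ 0 := (Real.rpow_pos_of_pos two_pos _).ne'
  rw [hgb, hgs, h2inv]
  field_simp
  ring
end
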